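/- Let A be an n×n complex matrix that is non-scalar (A is not of the form c·I for a scalar c), and let γ₁, …, γₙ be complex numbers with γ₁ + ⋯ + γₙ = tr A. Then there exists an n×n complex matrix B similar to A (i.e., B = S⁻¹AS for some invertible S) whose diagonal entries are B_{ii} = γᵢ for i = 1, …, n. (Fillmore's theorem over ℂ.) -/

import Mathlib

open Polynomial Matrix

section FillmoreAux
open Set

lemma fillmore_aux_pair {n : ℕ} (hn : 2 ≤ n) (A : Matrix (Fin n) (Fin n) ℂ)
    (hA : ∀ c : ℂ, A ≠ c • (1 : Matrix (Fin n) (Fin n) ℂ)) :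
    ∃ v : Fin n → ℂ, LinearIndependent ℂ ![A.mulVec v, v] := by
  by_contra h
  push_neg at h
  have key : ∀ v : Fin n → ℂ, v ≠ 0 → ∃ a : ℂ, A.mulVec v = a • v := by
    intro v hv
    have h2 := h v
    rw [linearIndependent_fin2] at h2
    push_neg at h2
    simp only [Matrix.cons_val_one, Matrix.head_cons, Matrix.cons_val_zero] at h2
    obtain ⟨a, ha⟩ := h2 hv
    exact ⟨a, ha.symm⟩
  have single_ne : ∀ i : Fin n, (Pi.single i 1 : Fin n → ℂ) ≠ 0 := by
    intro i hi
    have := congrFun hi i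
    simp at this
  choose a ha using fun i => key (Pi.single i 1) (single_ne i)
  have hcol : ∀ i k, A k i = a i * (if k = i then 1 else 0) := by
    intro i k
    have := congrFun (ha i) k
    simpa [mulVec, dotProduct, Pi.single_apply, eq_comm] using this
  have haeq : ∀ i j, a i = a j := by
    intro i j
    rcases eq_or_ne i j with rfl | hij
    · rfl
    · have hv : (Pi.single i 1 + Pi.single j 1 : Fin n → ℂ) ≠ 0 := by
        intro hz
        have := congrFun hz i
        simp [Pi.single_apply, hij] at this
      obtain ⟨d, hd⟩ := key _ hv
      have hAv : A.mulVec (Pi.single i 1 + Pi.single j 1 : Fin n → ℂ) = a i • (Pi.single i 1 : Fin n → ℂ) + a j • (Pi.single j 1 : Fin n → ℂ) := by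
        rw [mulVec_add, ha i, ha j]
      have hi' := congrFun (hAv.symm.trans hd) i
      have hj' := congrFun (hAv.symm.trans hd) j
      simp [Pi.single_apply, hij, hij.symm] at hi' hj'
      rw [hi', hj']
  have i0 : Fin n := ⟨0, by omega⟩
  apply hA (a i0)
  ext k i
  rw [hcol i k]
  simp [Matrix.one_apply, haeq i i0]

lemma fillmore_aux_col {m : ℕ} (A : Matrix (Fin (m+2)) (Fin (m+2)) ℂ)
    (v : Fin (m+2) → ℂ) (hli : LinearIndependent ℂ ![A.mulVec v, v]) (γ₀ : ℂ) :
    ∃ S : Matrix (Fin (m+2)) (Fin (m+2)) ℂ, IsUnit S.det ∧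
      ∀ i, (S⁻¹ * A * S) i 0 = (if i = 0 then γ₀ else if i = 1 then 1 else 0) := by
  rw [linearIndependent_fin2] at hli
  simp only [Matrix.cons_val_one, Matrix.head_cons, Matrix.cons_val_zero] at hli
  obtain ⟨hv0, hnp⟩ := hli
  set w : Fin (m+2) → ℂ := A.mulVec v - γ₀ • v with hw
  have hlivw : LinearIndependent ℂ ![v, w] := by
    rw [linearIndependent_fin2]
    simp only [Matrix.cons_val_one, Matrix.head_cons, Matrix.cons_val_zero]
    constructor
    · intro h0
      exact hnp γ₀ (by rw [← sub_eq_zero]; rw [hw] at h0; linear_combination (norm := module) -h0)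
    · intro a hav
      rcases eq_or_ne a 0 with rfl | ha
      · simp at hav; exact hv0 hav.symm
      · apply hnp (a⁻¹ * (1 + a * γ₀))
        rw [hw] at hav
        have : a • A.mulVec v = (1 + a * γ₀) • v := by linear_combination (norm := module) hav
        have := congrArg (fun x => a⁻¹ • x) this
        simpa [smul_smul, inv_mul_cancel₀ ha, eq_comm] using this
  -- extend {v, w} to a basis
  have hvw : v ≠ w := by
    intro h
    have h2 : ((0:Fin 2) = 1) := hlivw.injective (by simpa using h)
    simp at h2
  have hs : LinearIndepOn ℂ id (Set.range ![v, w]) :=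
    hlivw.linearIndepOn_id
  let b := Module.Basis.extend hs
  have hvT : v ∈ hs.extend (Set.subset_univ _) := hs.subset_extend _ ⟨0, rfl⟩
  have hwT : w ∈ hs.extend (Set.subset_univ _) := hs.subset_extend _ ⟨1, rfl⟩
  let e := b.indexEquiv (Pi.basisFun ℂ (Fin (m+2)))
  set i₀ := e ⟨v, hvT⟩ with hi₀
  set i₁ := e ⟨w, hwT⟩ with hi₁
  have hne : i₀ ≠ i₁ := by
    intro h
    exact hvw (congrArg Subtype.val (e.injective h))
  have h01 : (0 : Fin (m+2)) ≠ 1 := by simp [Fin.ext_iff]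
  set j := Equiv.swap i₀ 0 i₁ with hj
  have hjne : j ≠ 0 := by
    rw [hj]
    rcases eq_or_ne i₁ 0 with h1 | h1
    · rw [h1, Equiv.swap_apply_right, ← h1]; exact hne
    · rw [Equiv.swap_apply_of_ne_of_ne (Ne.symm hne) h1]; exact h1
  let σ : Equiv.Perm (Fin (m+2)) := (Equiv.swap i₀ 0).trans (Equiv.swap j 1)
  have hσ₀ : σ i₀ = 0 := by
    simp only [σ, Equiv.trans_apply, Equiv.swap_apply_left]
    rw [Equiv.swap_apply_of_ne_of_ne hjne.symm h01]
  have hσ₁ : σ i₁ = 1 := by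
    simp only [σ, Equiv.trans_apply, ← hj, Equiv.swap_apply_left]
  let c := b.reindex (e.trans σ)
  have hc0 : c 0 = v := by
    have : (e.trans σ) ⟨v, hvT⟩ = 0 := hσ₀
    rw [show (0 : Fin (m+2)) = (e.trans σ) ⟨v, hvT⟩ from this.symm]
    simp [c, b, Module.Basis.extend_apply_self]
  have hc1 : c 1 = w := by
    have : (e.trans σ) ⟨w, hwT⟩ = 1 := hσ₁
    rw [show (1 : Fin (m+2)) = (e.trans σ) ⟨w, hwT⟩ from this.symm]
    simp [c, b, Module.Basis.extend_apply_self]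
  -- the change of basis matrix
  set S := (Pi.basisFun ℂ (Fin (m+2))).toMatrix c with hS
  have hSentry : ∀ i k, S i k = c k i := by
    intro i k
    rw [hS, Module.Basis.toMatrix_apply, Pi.basisFun_repr]
  haveI := (Pi.basisFun ℂ (Fin (m+2))).invertibleToMatrix c
  have hdet : IsUnit S.det := Matrix.isUnit_det_of_invertible S
  refine ⟨S, hdet, ?_⟩
  have hSM : S * (S⁻¹ * A * S) = A * S := by
    rw [show S⁻¹ * A * S = S⁻¹ * (A * S) by rw [Matrix.mul_assoc], Matrix.mul_nonsing_inv_cancel_left _ _ hdet]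
  have key : S.mulVec (fun j => (S⁻¹ * A * S) j 0)
      = S.mulVec (fun i => if i = 0 then γ₀ else if i = 1 then 1 else 0) := by
    have lhs : S.mulVec (fun j => (S⁻¹ * A * S) j 0) = fun i => (A * S) i 0 := by
      funext i
      rw [← hSM]
      simp [Matrix.mulVec, Matrix.mul_apply, dotProduct]
    have rhs : S.mulVec (fun i => if i = 0 then γ₀ else if i = 1 then 1 else 0)
        = γ₀ • v + w := by
      funext i
      simp only [Matrix.mulVec, dotProduct]
      rw [Finset.sum_eq_add_of_mem (0 : Fin (m+2)) 1 (Finset.mem_univ _) (Finset.mem_univ _) h01]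
      · simp [hSentry, hc0, hc1, h01, (Ne.symm h01)]; ring
      · intro k _ hk
        simp [hk.1, hk.2]
    have lhs2 : (fun i => (A * S) i 0) = γ₀ • v + w := by
      funext i
      have : (A * S) i 0 = A.mulVec v i := by
        simp [Matrix.mul_apply, Matrix.mulVec, dotProduct, hSentry, hc0]
      rw [this, hw]
      simp
    rw [lhs, rhs, lhs2]
  have hinj : Function.Injective S.mulVec := by
    intro x y hxy
    have := congrArg (fun z => S⁻¹.mulVec z) hxy
    simpa [Matrix.mulVec_mulVec, Matrix.nonsing_inv_mul _ hdet] using this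
  intro i
  exact congrFun (hinj key) i

private def fillLift {m : ℕ} (T : Matrix (Fin (m+1)) (Fin (m+1)) ℂ) :
    Matrix (Fin (m+2)) (Fin (m+2)) ℂ :=
  Matrix.of fun i j =>
    Fin.cases (Fin.cases (1:ℂ) (fun _ => 0) j)
      (fun i' => Fin.cases 0 (fun j' => T i' j') j) i

private lemma fillLift_00 {m : ℕ} (T : Matrix (Fin (m+1)) (Fin (m+1)) ℂ) :
    fillLift T 0 0 = 1 := rfl

private lemma fillLift_0s {m : ℕ} (T : Matrix (Fin (m+1)) (Fin (m+1)) ℂ) (j : Fin (m+1)) :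
    fillLift T 0 j.succ = 0 := by simp [fillLift]

private lemma fillLift_s0 {m : ℕ} (T : Matrix (Fin (m+1)) (Fin (m+1)) ℂ) (i : Fin (m+1)) :
    fillLift T i.succ 0 = 0 := by simp [fillLift]

private lemma fillLift_ss {m : ℕ} (T : Matrix (Fin (m+1)) (Fin (m+1)) ℂ) (i j : Fin (m+1)) :
    fillLift T i.succ j.succ = T i j := by simp [fillLift]

private lemma fillLift_mul {m : ℕ} (X Y : Matrix (Fin (m+1)) (Fin (m+1)) ℂ) :
    fillLift X * fillLift Y = fillLift (X * Y) := by
  ext a b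
  rw [Matrix.mul_apply, Fin.sum_univ_succ]
  induction a using Fin.cases with
  | zero =>
    induction b using Fin.cases with
    | zero => simp [fillLift_00, fillLift_0s, fillLift_s0]
    | succ b => simp [fillLift_00, fillLift_0s, fillLift_s0]
  | succ a =>
    induction b using Fin.cases with
    | zero => simp [fillLift_00, fillLift_0s, fillLift_s0, fillLift_ss]
    | succ b => simp [fillLift_00, fillLift_0s, fillLift_s0, fillLift_ss, Matrix.mul_apply]

private lemma fillLift_one {m : ℕ} : fillLift (1 : Matrix (Fin (m+1)) (Fin (m+1)) ℂ) = 1 := by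
  ext a b
  induction a using Fin.cases with
  | zero =>
    induction b using Fin.cases with
    | zero => simp [fillLift_00, Matrix.one_apply]
    | succ b => simp [fillLift_0s, Matrix.one_apply, (Fin.succ_ne_zero b).symm]
  | succ a =>
    induction b using Fin.cases with
    | zero => simp [fillLift_s0, Matrix.one_apply, Fin.succ_ne_zero a]
    | succ b => simp [fillLift_ss, Matrix.one_apply, Fin.succ_inj]

private lemma fillLift_isUnit_det {m : ℕ} (T : Matrix (Fin (m+1)) (Fin (m+1)) ℂ)
    (hT : IsUnit T.det) : IsUnit (fillLift T).det := by
  apply Matrix.isUnit_det_of_right_inverse (B := fillLift T⁻¹)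
  rw [fillLift_mul, Matrix.mul_nonsing_inv _ hT, fillLift_one]

private lemma fillLift_inv {m : ℕ} (T : Matrix (Fin (m+1)) (Fin (m+1)) ℂ)
    (hT : IsUnit T.det) : (fillLift T)⁻¹ = fillLift T⁻¹ := by
  apply Matrix.inv_eq_right_inv
  rw [fillLift_mul, Matrix.mul_nonsing_inv _ hT, fillLift_one]

private lemma fillLift_conj_00 {m : ℕ} (X Y : Matrix (Fin (m+1)) (Fin (m+1)) ℂ)
    (M : Matrix (Fin (m+2)) (Fin (m+2)) ℂ) :
    (fillLift X * M * fillLift Y) 0 0 = M 0 0 := by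
  have hrow : ∀ l, (fillLift X * M) 0 l = M 0 l := by
    intro l
    rw [Matrix.mul_apply, Fin.sum_univ_succ]
    simp [fillLift_00, fillLift_0s]
  rw [Matrix.mul_apply, Fin.sum_univ_succ]
  simp [hrow, fillLift_00, fillLift_s0]

private lemma fillLift_conj_ss {m : ℕ} (X Y : Matrix (Fin (m+1)) (Fin (m+1)) ℂ)
    (M : Matrix (Fin (m+2)) (Fin (m+2)) ℂ) (i j : Fin (m+1)) :
    (fillLift X * M * fillLift Y) i.succ j.succ
      = (X * M.submatrix Fin.succ Fin.succ * Y) i j := by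
  have hrow : ∀ l, (fillLift X * M) i.succ l = ∑ k, X i k * M k.succ l := by
    intro l
    rw [Matrix.mul_apply, Fin.sum_univ_succ]
    simp [fillLift_s0, fillLift_ss]
  rw [Matrix.mul_apply, Fin.sum_univ_succ]
  simp only [hrow, fillLift_0s, fillLift_ss, mul_zero, zero_add]
  rw [Matrix.mul_apply]
  congr 1

private lemma conj_step {n : ℕ} (A P : Matrix (Fin n) (Fin n) ℂ) (hP : IsUnit P.det)
    (γ : Fin n → ℂ)
    (h : ∃ S : Matrix (Fin n) (Fin n) ℂ, IsUnit S.det ∧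
        ∀ i, (S⁻¹ * (P⁻¹ * A * P) * S) i i = γ i) :
    ∃ S : Matrix (Fin n) (Fin n) ℂ, IsUnit S.det ∧ ∀ i, (S⁻¹ * A * S) i i = γ i := by
  obtain ⟨S, hS, hd⟩ := h
  refine ⟨P * S, by rw [Matrix.det_mul]; exact hP.mul hS, ?_⟩
  intro i
  rw [Matrix.mul_inv_rev]
  have : S⁻¹ * P⁻¹ * A * (P * S) = S⁻¹ * (P⁻¹ * A * P) * S := by
    simp only [Matrix.mul_assoc]
  rw [this]
  exact hd i

private lemma fillmore_finish {m : ℕ} (M : Matrix (Fin (m+2)) (Fin (m+2)) ℂ)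
    (γ : Fin (m+2) → ℂ) (h00 : M 0 0 = γ 0)
    (hIH : ∃ T : Matrix (Fin (m+1)) (Fin (m+1)) ℂ, IsUnit T.det ∧
        ∀ i, (T⁻¹ * M.submatrix Fin.succ Fin.succ * T) i i = γ i.succ) :
    ∃ S : Matrix (Fin (m+2)) (Fin (m+2)) ℂ, IsUnit S.det ∧
      ∀ i, (S⁻¹ * M * S) i i = γ i := by
  obtain ⟨T, hT, hdiag⟩ := hIH
  refine ⟨fillLift T, fillLift_isUnit_det T hT, ?_⟩
  intro i
  rw [fillLift_inv T hT]
  induction i using Fin.cases with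
  | zero => rw [fillLift_conj_00]; exact h00
  | succ i => rw [fillLift_conj_ss]; exact hdiag i



lemma fillmore_main : ∀ (n : ℕ) (A : Matrix (Fin n) (Fin n) ℂ),
    (∀ c : ℂ, A ≠ c • (1 : Matrix (Fin n) (Fin n) ℂ)) →
    ∀ γ : Fin n → ℂ, (∑ i, γ i = A.trace) →
    ∃ S : Matrix (Fin n) (Fin n) ℂ, IsUnit S.det ∧
      ∀ i, (S⁻¹ * A * S) i i = γ i := by
  intro n
  induction n using Nat.strong_induction_on with
  | _ n IH =>
  intro A hA γ hγ
  obtain _ | _ | m := n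
  · exact absurd (show A = (0:ℂ) • 1 by ext i j; exact i.elim0) (hA 0)
  · refine absurd (show A = (A 0 0) • 1 by ext i j; fin_cases i <;> fin_cases j <;> simp) (hA _)
  · -- n = m + 2
    obtain ⟨v, hli⟩ := fillmore_aux_pair (by omega) A hA
    obtain ⟨S₁, hS₁, hcol⟩ := fillmore_aux_col A v hli (γ 0)
    apply conj_step A S₁ hS₁ γ
    set M := S₁⁻¹ * A * S₁ with hMdef
    have htr : M.trace = A.trace := by
      rw [hMdef, Matrix.trace_mul_comm, ← Matrix.mul_assoc,
        Matrix.mul_nonsing_inv _ hS₁, Matrix.one_mul]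
    have h00 : M 0 0 = γ 0 := by simpa using hcol 0
    have h10 : M 1 0 = 1 := by
      have := hcol 1
      rwa [if_neg (by simp [Fin.ext_iff]), if_pos rfl] at this
    have hother : ∀ i, i ≠ 0 → i ≠ 1 → M i 0 = 0 := by
      intro i hi0 hi1
      rw [hcol i, if_neg hi0, if_neg hi1]
    obtain _ | m' := m
    · -- 2 × 2 case
      refine ⟨1, by simp, ?_⟩
      have h2 : M 0 0 + M 1 1 = γ 0 + γ 1 := by
        rw [← Matrix.trace_fin_two, htr, ← hγ, Fin.sum_univ_two]
      have h11 : M 1 1 = γ 1 := by linear_combination h2 - h00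
      intro i
      have hone : (1 : Matrix (Fin 2) (Fin 2) ℂ)⁻¹ = 1 :=
        Matrix.inv_eq_right_inv (by rw [Matrix.one_mul])
      fin_cases i <;> simp [hone, h00, h11]
    · -- size ≥ 3
      set C := M.submatrix Fin.succ Fin.succ with hCdef
      have e1 : M.trace = M 0 0 + C.trace := by
        simp [Matrix.trace, Matrix.diag, Fin.sum_univ_succ, hCdef]
      have htrC : ∑ i : Fin (m' + 2), γ i.succ = C.trace := by
        have h := hγ
        rw [Fin.sum_univ_succ, ← htr, e1, h00] at h
        exact add_left_cancel h
      by_cases hC : ∀ c : ℂ, C ≠ c • 1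
      · exact fillmore_finish M γ h00 (IH (m' + 2) (by omega) C hC (fun i => γ i.succ) htrC)
      · push_neg at hC
        obtain ⟨c, hc⟩ := hC
        set i₂ : Fin (m' + 3) := ⟨2, by omega⟩ with hi₂def
        have hi₂0 : i₂ ≠ 0 := by simp [hi₂def, Fin.ext_iff]
        have hi₂1 : i₂ ≠ 1 := by simp [hi₂def, Fin.ext_iff]
        set u := Matrix.single (0 : Fin (m' + 3)) i₂ (1:ℂ) with hudef
        have huu : u * u = 0 := Matrix.single_mul_single_of_ne _ _ _ _ hi₂0 1
        have hEr : (1 + u) * (1 - u) = 1 := by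
          have h : (1 + u) * (1 - u) = 1 - u * u := by noncomm_ring
          rw [h, huu, sub_zero]
        have hdetE : IsUnit (1 + u).det := Matrix.isUnit_det_of_right_inverse hEr
        have hEinv : (1 + u)⁻¹ = 1 - u := Matrix.inv_eq_right_inv hEr
        apply conj_step M (1 + u) hdetE γ
        set M₂ := (1 + u)⁻¹ * M * (1 + u) with hM₂def
        have hM₂ : M₂ = M + M * u - u * M - u * (M * u) := by
          rw [hM₂def, hEinv]; noncomm_ring
        have hMu : ∀ (X : Matrix (Fin (m'+3)) (Fin (m'+3)) ℂ) a b,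
            (X * u) a b = if b = i₂ then X a 0 else 0 := by
          intro X a b
          rcases eq_or_ne b i₂ with rfl | h
          · rw [if_pos rfl, hudef]
            simpa using Matrix.mul_single_apply_same 1 0 i₂ a X
          · rw [if_neg h, hudef]
            exact Matrix.mul_single_apply_of_ne 1 0 i₂ a b h X
        have huX : ∀ (X : Matrix (Fin (m'+3)) (Fin (m'+3)) ℂ) a b,
            (u * X) a b = if a = 0 then X i₂ b else 0 := by
          intro X a b
          rcases eq_or_ne a 0 with rfl | h
          · rw [if_pos rfl, hudef]
            simpa using Matrix.single_mul_apply_same 1 0 i₂ b X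
          · rw [if_neg h, hudef]
            exact Matrix.single_mul_apply_of_ne 1 0 i₂ a b h X
        have h00₂ : M₂ 0 0 = γ 0 := by
          rw [hM₂]
          simp only [Matrix.sub_apply, Matrix.add_apply]
          rw [hMu M 0 0, huX M 0 0, huX (M * u) 0 0, hMu M i₂ 0,
            if_neg (Ne.symm hi₂0), if_pos rfl, if_pos rfl,
            if_neg (Ne.symm hi₂0), hother i₂ hi₂0 hi₂1]
          rw [h00]; ring
        set C₂ := M₂.submatrix Fin.succ Fin.succ with hC₂def
        have hC₂ : ∀ k l, C₂ k l = C k l + if l.succ = i₂ then M k.succ 0 else 0 := by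
          intro k l
          rw [hC₂def, Matrix.submatrix_apply, hM₂]
          simp only [Matrix.sub_apply, Matrix.add_apply]
          rw [hMu M k.succ l.succ, huX M k.succ l.succ, huX (M * u) k.succ l.succ,
            if_neg (Fin.succ_ne_zero k), if_neg (Fin.succ_ne_zero k)]
          rw [hCdef, Matrix.submatrix_apply]
          ring
        set j₁ : Fin (m' + 2) := ⟨1, by omega⟩ with hj₁def
        have hj₁succ : j₁.succ = i₂ := rfl
        have hC₂ns : ∀ d : ℂ, C₂ ≠ d • 1 := by
          intro d hd
          have h1 := congrFun (congrFun hd 0) j₁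
          rw [hC₂ 0 j₁, Fin.succ_zero_eq_one, hj₁succ, if_pos rfl, h10, hc] at h1
          have h0j : (0 : Fin (m' + 2)) ≠ j₁ := by simp [hj₁def, Fin.ext_iff]
          rw [Matrix.smul_apply, Matrix.smul_apply, Matrix.one_apply_ne h0j] at h1
          simp at h1
        have hdiagC₂ : ∀ k, C₂ k k = C k k := by
          intro k
          rw [hC₂]
          rcases eq_or_ne k.succ i₂ with h | h
          · rw [if_pos h, h, hother i₂ hi₂0 hi₂1, add_zero]
          · rw [if_neg h, add_zero]
        have htrC₂ : ∑ i : Fin (m' + 2), γ i.succ = C₂.trace := by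
          rw [htrC]
          simp [Matrix.trace, Matrix.diag, hdiagC₂]
        exact fillmore_finish M₂ γ h00₂
          (IH (m' + 2) (by omega) C₂ hC₂ns (fun i => γ i.succ) htrC₂)

end FillmoreAux

/-- Fillmore's theorem over ℂ: if `A` is a non-scalar `n × n` complex matrix and
`γ₁ + ⋯ + γₙ = tr A`, then some matrix `B = S⁻¹ A S` similar to `A` has diagonal
entries `γ₁, …, γₙ`. -/
theorem fillmore {n : ℕ} (A : Matrix (Fin n) (Fin n) ℂ)
    (hA : ∀ c : ℂ, A ≠ c • (1 : Matrix (Fin n) (Fin n) ℂ))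
    (γ : Fin n → ℂ) (hγ : ∑ i, γ i = A.trace) :
    ∃ S : Matrix (Fin n) (Fin n) ℂ, IsUnit S.det ∧
      ∀ i, (S⁻¹ * A * S) i i = γ i :=
  fillmore_main n A hA γ hγ
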